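/- (Variance decreases in peer susceptibility.) Suppose G is d-regular (so W = A/d is symmetric), fix β ∈ (0,1), and suppose x* is not a constant vector (Var(x*) > 0). For α ∈ (0,1) set α_i ≡ α, let Ψ_∞(α) = Σ_{k=0}^{∞} (αW)^k (1 − α) = (1 − α)(I − αW)^{−1}, and let x_PS(α) = (1 − β)(I − βΨ_∞(α))^{−1} Ψ_∞(α) x*. Then the function α ↦ Var(x_PS(α)) is differentiable on (0,1) and its derivative is strictly negative at every α ∈ (0,1). -/

import Mathlib

open Matrix Filter Topology

/-- Row-normalized adjacency matrix `W = deg⁻¹ A` of a simple graph. -/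
noncomputable def rowNormAdj {n : ℕ} (G : SimpleGraph (Fin n)) [DecidableRel G.Adj] :
    Matrix (Fin n) (Fin n) ℝ :=
  Matrix.of fun i j => (G.adjMatrix ℝ) i j / (G.degree i : ℝ)

/-- `Mean(x) = (1/n) Σ_i x_i`. -/
noncomputable def meanV {n : ℕ} (x : Fin n → ℝ) : ℝ := (∑ i, x i) / n

/-- `Var(x) = Σ_i (x_i − Mean(x))²`. -/
noncomputable def varV {n : ℕ} (x : Fin n → ℝ) : ℝ := ∑ i, (x i - meanV x) ^ 2

set_option linter.unusedSectionVars false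
set_option maxHeartbeats 1600000

section Aux

section Graph
variable {n : ℕ} (G : SimpleGraph (Fin n)) [DecidableRel G.Adj]

lemma adj_lap_nonneg (u : Fin n → ℝ) :
    0 ≤ ∑ i, ∑ j, G.adjMatrix ℝ i j * (u i - u j)^2 := by
  refine Finset.sum_nonneg fun i _ => Finset.sum_nonneg fun j _ => ?_
  have : (0:ℝ) ≤ G.adjMatrix ℝ i j := by
    by_cases h : G.Adj i j <;> simp [SimpleGraph.adjMatrix_apply, h]
  positivity

lemma adj_row_sum {d : ℕ} (hreg : ∀ i, G.degree i = d) (i : Fin n) :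
    ∑ j, G.adjMatrix ℝ i j = (d : ℝ) := by
  have := G.adjMatrix_mulVec_const_apply (α := ℝ) (a := 1) (v := i)
  simpa [mulVec, dotProduct, hreg i] using this

lemma adj_symm (i j : Fin n) : G.adjMatrix ℝ i j = G.adjMatrix ℝ j i := by
  simp [SimpleGraph.adjMatrix_apply, SimpleGraph.adj_comm]

lemma adj_col_sum {d : ℕ} (hreg : ∀ i, G.degree i = d) (j : Fin n) :
    ∑ i, G.adjMatrix ℝ i j = (d : ℝ) := by
  rw [← adj_row_sum G hreg j]
  exact Finset.sum_congr rfl fun i _ => adj_symm G i j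

-- Laplacian identity
lemma lap_identity {d : ℕ} (hreg : ∀ i, G.degree i = d) (u : Fin n → ℝ) :
    ∑ i, ∑ j, G.adjMatrix ℝ i j * (u i - u j)^2
      = 2 * ((d:ℝ) * (u ⬝ᵥ u) - u ⬝ᵥ (G.adjMatrix ℝ *ᵥ u)) := by
  have expand : ∀ i j, G.adjMatrix ℝ i j * (u i - u j)^2
      = G.adjMatrix ℝ i j * u i^2 + G.adjMatrix ℝ i j * u j^2
        - 2 * (u i * (G.adjMatrix ℝ i j * u j)) := fun i j => by ring
  simp only [expand, Finset.sum_sub_distrib, Finset.sum_add_distrib, ← Finset.mul_sum]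
  have h1 : ∑ i, ∑ j, G.adjMatrix ℝ i j * u i ^ 2 = (d:ℝ) * (u ⬝ᵥ u) := by
    simp only [dotProduct, Finset.mul_sum]
    refine Finset.sum_congr rfl fun i _ => ?_
    rw [← Finset.sum_mul, adj_row_sum G hreg i]
    ring
  have h2 : ∑ i, ∑ j, G.adjMatrix ℝ i j * u j ^ 2 = (d:ℝ) * (u ⬝ᵥ u) := by
    rw [Finset.sum_comm]
    simp only [dotProduct, Finset.mul_sum]
    refine Finset.sum_congr rfl fun j _ => ?_
    rw [← Finset.sum_mul, adj_col_sum G hreg j]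
    ring
  have h3 : ∑ i, u i * ∑ j, G.adjMatrix ℝ i j * u j = u ⬝ᵥ (G.adjMatrix ℝ *ᵥ u) := by
    simp [dotProduct, mulVec]
  rw [h1, h2, h3]; ring

lemma walk_const {u : Fin n → ℝ} (h : ∀ i j, G.Adj i j → u i = u j) :
    ∀ {i j : Fin n}, G.Walk i j → u i = u j := by
  intro i j w
  induction w with
  | nil => rfl
  | cons hadj _ ih => exact (h _ _ hadj).trans ih

lemma lap_pos (hn : 2 ≤ n) (hG : G.Connected) {u : Fin n → ℝ}
    (hsum : ∑ i, u i = 0) (hu : u ≠ 0) :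
    0 < ∑ i, ∑ j, G.adjMatrix ℝ i j * (u i - u j)^2 := by
  have hnn : ∀ i j, 0 ≤ G.adjMatrix ℝ i j * (u i - u j)^2 := fun i j => by
    have : (0:ℝ) ≤ G.adjMatrix ℝ i j := by simp [SimpleGraph.adjMatrix_apply]; positivity
    positivity
  have hge : 0 ≤ ∑ i, ∑ j, G.adjMatrix ℝ i j * (u i - u j)^2 :=
    Finset.sum_nonneg fun i _ => Finset.sum_nonneg fun j _ => hnn i j
  rcases hge.lt_or_eq with h | h
  · exact h
  · exfalso
    have hzero : ∀ i j, G.adjMatrix ℝ i j * (u i - u j)^2 = 0 := by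
      intro i j
      have h1 := Finset.sum_eq_zero_iff_of_nonneg
        (fun i _ => Finset.sum_nonneg fun j _ => hnn i j) |>.mp h.symm i (Finset.mem_univ i)
      exact (Finset.sum_eq_zero_iff_of_nonneg (fun j _ => hnn i j)).mp h1 j (Finset.mem_univ j)
    have hadj : ∀ i j, G.Adj i j → u i = u j := by
      intro i j hij
      have := hzero i j
      rw [SimpleGraph.adjMatrix_apply, if_pos hij, one_mul] at this
      exact sub_eq_zero.mp (pow_eq_zero_iff (by norm_num) |>.mp this)
    have hconst : ∀ i j, u i = u j := fun i j =>
      walk_const G hadj ((hG.preconnected i j).some)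
    obtain ⟨i0⟩ : Nonempty (Fin n) := ⟨⟨0, by omega⟩⟩
    have : ∑ i, u i = n * u i0 := by
      rw [Finset.sum_congr rfl fun i _ => hconst i i0]
      simp [Finset.card_univ, mul_comm]
    have hu0 : u i0 = 0 := by
      have hn0 : (n:ℝ) ≠ 0 := Nat.cast_ne_zero.mpr (by omega)
      rw [this] at hsum
      rcases mul_eq_zero.mp hsum with h | h
      · exact absurd h hn0
      · exact h
    exact hu (funext fun i => by rw [hconst i i0, hu0]; rfl)

lemma adj_cs {d : ℕ} (hreg : ∀ i, G.degree i = d) (u : Fin n → ℝ) :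
    (G.adjMatrix ℝ *ᵥ u) ⬝ᵥ (G.adjMatrix ℝ *ᵥ u) ≤ (d:ℝ)^2 * (u ⬝ᵥ u) := by
  have key : ∀ i, ((G.adjMatrix ℝ *ᵥ u) i)^2 ≤ (d:ℝ) * ∑ j, G.adjMatrix ℝ i j * (u j)^2 := by
    intro i
    have hcs := Finset.sum_mul_sq_le_sq_mul_sq Finset.univ
      (fun j => G.adjMatrix ℝ i j) (fun j => G.adjMatrix ℝ i j * u j)
    have hsq : ∀ j, (G.adjMatrix ℝ i j)^2 = G.adjMatrix ℝ i j := fun j => by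
      by_cases h : G.Adj i j <;> simp [SimpleGraph.adjMatrix_apply, h]
    have hmv : (G.adjMatrix ℝ *ᵥ u) i = ∑ j, G.adjMatrix ℝ i j * (G.adjMatrix ℝ i j * u j) := by
      simp only [mulVec, dotProduct]
      exact Finset.sum_congr rfl fun j _ => by rw [← mul_assoc, ← sq, hsq]
    rw [hmv]
    calc (∑ j, G.adjMatrix ℝ i j * (G.adjMatrix ℝ i j * u j))^2
        ≤ (∑ j, (G.adjMatrix ℝ i j)^2) * ∑ j, (G.adjMatrix ℝ i j * u j)^2 := hcs
      _ = (d:ℝ) * ∑ j, G.adjMatrix ℝ i j * (u j)^2 := by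
          rw [Finset.sum_congr rfl fun j _ => hsq j, adj_row_sum G hreg i]
          congr 1
          exact Finset.sum_congr rfl fun j _ => by rw [mul_pow, hsq]
  calc (G.adjMatrix ℝ *ᵥ u) ⬝ᵥ (G.adjMatrix ℝ *ᵥ u) = ∑ i, ((G.adjMatrix ℝ *ᵥ u) i)^2 := by
        simp [dotProduct, sq]
    _ ≤ ∑ i, (d:ℝ) * ∑ j, G.adjMatrix ℝ i j * (u j)^2 :=
        Finset.sum_le_sum fun i _ => key i
    _ = (d:ℝ)^2 * (u ⬝ᵥ u) := by
        rw [← Finset.mul_sum, Finset.sum_comm]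
        have hcol : ∀ j : Fin n, ∑ i, G.adjMatrix ℝ i j * (u j)^2 = (d:ℝ) * (u j)^2 :=
          fun j => by rw [← Finset.sum_mul, adj_col_sum G hreg j]
        rw [Finset.sum_congr rfl fun j _ => hcol j, ← Finset.mul_sum]
        simp only [dotProduct]
        rw [Finset.sum_congr rfl (fun j (_ : j ∈ Finset.univ) => (sq (u j)).symm)]
        ring

lemma dot_self_nonneg (u : Fin n → ℝ) : 0 ≤ u ⬝ᵥ u :=
  Finset.sum_nonneg fun i _ => mul_self_nonneg (u i)

lemma dot_self_pos {u : Fin n → ℝ} (hu : u ≠ 0) : 0 < u ⬝ᵥ u := by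
  rcases (dot_self_nonneg u).lt_or_eq with h | h
  · exact h
  · exfalso
    apply hu
    funext i
    have := (Finset.sum_eq_zero_iff_of_nonneg
      (fun i (_ : i ∈ Finset.univ) => mul_self_nonneg (u i))).mp h.symm i (Finset.mem_univ i)
    have := mul_self_eq_zero.mp this
    simpa using this

/-- expansion of a degree-1 poly product in `W` -/
lemma poly_mul (W : Matrix (Fin n) (Fin n) ℝ) (p q r t : ℝ) :
    (p • (1 : Matrix (Fin n) (Fin n) ℝ) - q • W) * (r • 1 - t • W)
      = (p*r) • (1 : Matrix (Fin n) (Fin n) ℝ) - (p*t + q*r) • W + (q*t) • (W*W) := by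
  simp only [Matrix.sub_mul, Matrix.mul_sub, smul_mul_assoc, mul_smul_comm, smul_smul,
    one_mul, mul_one]
  module

lemma poly_comm (W : Matrix (Fin n) (Fin n) ℝ) (p q r t : ℝ) :
    (p • (1 : Matrix (Fin n) (Fin n) ℝ) - q • W) * (r • 1 - t • W)
      = (r • 1 - t • W) * (p • (1 : Matrix (Fin n) (Fin n) ℝ) - q • W) := by
  rw [poly_mul, poly_mul]; module

lemma poly_mulVec (W : Matrix (Fin n) (Fin n) ℝ) (p q : ℝ) (u : Fin n → ℝ) :
    (p • (1 : Matrix (Fin n) (Fin n) ℝ) - q • W) *ᵥ u = p • u - q • (W *ᵥ u) := by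
  simp [Matrix.sub_mulVec, Matrix.smul_mulVec]

lemma dot_poly (W : Matrix (Fin n) (Fin n) ℝ) (p q : ℝ) (u : Fin n → ℝ) :
    u ⬝ᵥ ((p • (1 : Matrix (Fin n) (Fin n) ℝ) - q • W) *ᵥ u)
      = p * (u ⬝ᵥ u) - q * (u ⬝ᵥ (W *ᵥ u)) := by
  rw [poly_mulVec]
  simp [dotProduct_sub, dotProduct_smul, smul_eq_mul]

section Wfacts
variable {W : Matrix (Fin n) (Fin n) ℝ}

lemma pd_lower (hb1 : ∀ u, u ⬝ᵥ (W *ᵥ u) ≤ u ⬝ᵥ u) {p q : ℝ} (hq : 0 ≤ q) (u : Fin n → ℝ) :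
    (p - q) * (u ⬝ᵥ u) ≤ u ⬝ᵥ ((p • (1 : Matrix (Fin n) (Fin n) ℝ) - q • W) *ᵥ u) := by
  rw [dot_poly]
  have := mul_le_mul_of_nonneg_left (hb1 u) hq
  nlinarith [dot_self_nonneg u]

lemma det_ne_zero (hb1 : ∀ u, u ⬝ᵥ (W *ᵥ u) ≤ u ⬝ᵥ u) {p q : ℝ} (hq : 0 ≤ q) (hpq : q < p) :
    ((p • (1 : Matrix (Fin n) (Fin n) ℝ) - q • W)).det ≠ 0 := by
  intro h
  obtain ⟨v, hv0, hv⟩ := (Matrix.exists_mulVec_eq_zero_iff).mpr h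
  have h1 := pd_lower hb1 (p := p) hq v
  rw [hv] at h1
  simp only [dotProduct_zero] at h1
  nlinarith [dot_self_pos hv0]

/-- key strict positivity: `uᵀ (I-W)(pI-qW) u > 0` for centered nonzero `u`. -/
lemma key_pos (hsym : Wᵀ = W)
    (hb2 : ∀ u, (W *ᵥ u) ⬝ᵥ (W *ᵥ u) ≤ u ⬝ᵥ u)
    (hstrict : ∀ u, (∑ i, u i) = 0 → u ≠ 0 → u ⬝ᵥ (W *ᵥ u) < u ⬝ᵥ u)
    {p q : ℝ} (hq : 0 < q) (hpq : q < p) {u : Fin n → ℝ}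
    (hsum : ∑ i, u i = 0) (hu : u ≠ 0) :
    0 < u ⬝ᵥ ((((1 : Matrix (Fin n) (Fin n) ℝ) - W) * (p • 1 - q • W)) *ᵥ u) := by
  have hexp : ((1 : Matrix (Fin n) (Fin n) ℝ) - W) * (p • 1 - q • W)
      = (p) • (1 : Matrix (Fin n) (Fin n) ℝ) - (p+q) • W + q • (W*W) := by
    have h := poly_mul W 1 1 p q
    simp only [one_smul, one_mul] at h
    rw [show q + p = p + q from add_comm q p] at h
    simpa using h
  rw [hexp]
  have hdot : u ⬝ᵥ (((p) • (1 : Matrix (Fin n) (Fin n) ℝ) - (p+q) • W + q • (W*W)) *ᵥ u)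
      = p * (u ⬝ᵥ u) - (p+q) * (u ⬝ᵥ (W *ᵥ u)) + q * ((W *ᵥ u) ⬝ᵥ (W *ᵥ u)) := by
    rw [Matrix.add_mulVec, dotProduct_add, dot_poly, Matrix.smul_mulVec,
      dotProduct_smul, ← Matrix.mulVec_mulVec]
    have : u ⬝ᵥ (W *ᵥ (W *ᵥ u)) = (W *ᵥ u) ⬝ᵥ (W *ᵥ u) := by
      rw [dotProduct_mulVec, ← Matrix.mulVec_transpose, hsym]
    rw [this, smul_eq_mul]
  rw [hdot]
  set S := u ⬝ᵥ u with hS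
  set Pp := u ⬝ᵥ (W *ᵥ u) with hPp
  set T := (W *ᵥ u) ⬝ᵥ (W *ᵥ u) with hT
  have hSpos : 0 < S := dot_self_pos hu
  have hPS : Pp < S := hstrict u hsum hu
  have hTS : T ≤ S := hb2 u
  have hCS : Pp^2 ≤ S * T := by
    have h := Finset.sum_mul_sq_le_sq_mul_sq Finset.univ u (W *ᵥ u)
    have e1 : Pp = ∑ i, u i * (W *ᵥ u) i := rfl
    have e2 : S = ∑ i, u i ^ 2 := by
      simp only [hS, dotProduct, sq]
    have e3 : T = ∑ i, (W *ᵥ u) i ^ 2 := by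
      simp only [hT, dotProduct, sq]
    rw [e1, e2, e3]
    simpa [sq] using h
  have h1 : 0 < p * S - q * Pp := by nlinarith
  have h2 : 0 < (S - Pp) * (p * S - q * Pp) := mul_pos (by linarith) h1
  have h3 : 0 ≤ q * (S * T - Pp^2) := by nlinarith
  by_contra hcon
  push_neg at hcon
  nlinarith
end Wfacts


variable {d : ℕ}

lemma rowNormAdj_eq' (hreg : ∀ i, G.degree i = d) : Matrix.of (fun i j => (G.adjMatrix ℝ) i j / (G.degree i : ℝ))
    = ((d:ℝ))⁻¹ • G.adjMatrix ℝ := by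
  ext i j
  simp only [Matrix.of_apply, Matrix.smul_apply, smul_eq_mul, hreg i, div_eq_inv_mul]

lemma W_symm (hd : 0 < d) : (((d:ℝ))⁻¹ • G.adjMatrix ℝ)ᵀ = ((d:ℝ))⁻¹ • G.adjMatrix ℝ := by
  rw [Matrix.transpose_smul, G.transpose_adjMatrix]

lemma W_one (hd : 0 < d) (hreg : ∀ i, G.degree i = d) : (((d:ℝ))⁻¹ • G.adjMatrix ℝ) *ᵥ (fun _ => (1:ℝ)) = fun _ => (1:ℝ) := by
  funext i
  have hd0 : (d:ℝ) ≠ 0 := Nat.cast_ne_zero.mpr hd.ne'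
  simp only [mulVec, dotProduct, Matrix.smul_apply, smul_eq_mul, mul_one]
  rw [← Finset.mul_sum, adj_row_sum G hreg i]
  field_simp

lemma W_b1 (hd : 0 < d) (hreg : ∀ i, G.degree i = d) (u : Fin n → ℝ) :
    u ⬝ᵥ ((((d:ℝ))⁻¹ • G.adjMatrix ℝ) *ᵥ u) ≤ u ⬝ᵥ u := by
  have hd0 : (0:ℝ) < (d:ℝ) := Nat.cast_pos.mpr hd
  have h := lap_identity G hreg u
  have h0 := adj_lap_nonneg G u
  rw [h] at h0
  rw [Matrix.smul_mulVec, dotProduct_smul, smul_eq_mul]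
  rw [inv_mul_le_iff₀ hd0]
  nlinarith

lemma W_strict (hd : 0 < d) (hreg : ∀ i, G.degree i = d) (hn : 2 ≤ n) (hG : G.Connected) (u : Fin n → ℝ)
    (hsum : ∑ i, u i = 0) (hu : u ≠ 0) :
    u ⬝ᵥ ((((d:ℝ))⁻¹ • G.adjMatrix ℝ) *ᵥ u) < u ⬝ᵥ u := by
  have hd0 : (0:ℝ) < (d:ℝ) := Nat.cast_pos.mpr hd
  have h := lap_identity G hreg u
  have h0 := lap_pos G hn hG hsum hu
  rw [h] at h0
  rw [Matrix.smul_mulVec, dotProduct_smul, smul_eq_mul]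
  rw [inv_mul_lt_iff₀ hd0]
  nlinarith

lemma W_b2 (hd : 0 < d) (hreg : ∀ i, G.degree i = d) (u : Fin n → ℝ) :
    ((((d:ℝ))⁻¹ • G.adjMatrix ℝ) *ᵥ u) ⬝ᵥ ((((d:ℝ))⁻¹ • G.adjMatrix ℝ) *ᵥ u) ≤ u ⬝ᵥ u := by
  have hd0 : (0:ℝ) < (d:ℝ) := Nat.cast_pos.mpr hd
  have h := adj_cs G hreg u
  rw [Matrix.smul_mulVec, dotProduct_smul, smul_dotProduct, smul_eq_mul, smul_eq_mul]
  rw [show ((d:ℝ))⁻¹ * (((d:ℝ))⁻¹ * ((G.adjMatrix ℝ *ᵥ u) ⬝ᵥ (G.adjMatrix ℝ *ᵥ u)))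
    = ((d:ℝ)^2)⁻¹ * ((G.adjMatrix ℝ *ᵥ u) ⬝ᵥ (G.adjMatrix ℝ *ᵥ u)) by ring]
  rw [inv_mul_le_iff₀ (by positivity)]
  nlinarith

end Graph

attribute [local instance] Matrix.frobeniusNormedRing Matrix.frobeniusNormedAlgebra

theorem main_pointwise {n : ℕ} (hn : 2 ≤ n) (W : Matrix (Fin n) (Fin n) ℝ)
    (hsym : Wᵀ = W) (hone : W *ᵥ (fun _ => (1:ℝ)) = fun _ => 1)
    (hb1 : ∀ u, u ⬝ᵥ (W *ᵥ u) ≤ u ⬝ᵥ u)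
    (hb2 : ∀ u, (W *ᵥ u) ⬝ᵥ (W *ᵥ u) ≤ u ⬝ᵥ u)
    (hstrict : ∀ u : Fin n → ℝ, ∑ i, u i = 0 → u ≠ 0 → u ⬝ᵥ (W *ᵥ u) < u ⬝ᵥ u)
    (β : ℝ) (hβ : β ∈ Set.Ioo (0:ℝ) 1)
    (xstar : Fin n → ℝ) (hvar : 0 < varV xstar)
    (a : ℝ) (ha : a ∈ Set.Ioo (0:ℝ) 1) :
    ∃ D : ℝ, D < 0 ∧ HasDerivAt
      (fun a' => varV ((1 - β) •
        (((1 - β • ((1 - a') • (1 - a' • W)⁻¹))⁻¹ * ((1 - a') • (1 - a' • W)⁻¹)) *ᵥ xstar))) D a := by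
  obtain ⟨hβ0, hβ1⟩ := hβ
  -- basic scalar setup
  set m : ℝ := meanV xstar with hm
  set z : Fin n → ℝ := fun i => xstar i - m with hz
  have hzsum : ∑ i, z i = 0 := by
    have hn0 : (n:ℝ) ≠ 0 := Nat.cast_ne_zero.mpr (by omega)
    simp only [hz, Finset.sum_sub_distrib, Finset.sum_const, Finset.card_univ, Fintype.card_fin,
      nsmul_eq_mul, hm, meanV]
    field_simp
    ring
  have hzne : z ≠ 0 := by
    intro h
    rw [varV] at hvar
    have : ∀ i, xstar i - meanV xstar = 0 := fun i => by
      have := congrFun h i; simpa [hz] using this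
    simp [this] at hvar
  -- the matrix family
  set Nf : ℝ → Matrix (Fin n) (Fin n) ℝ := fun t => (1 - β + t*β) • 1 - t • W with hNf
  set Bm : Matrix (Fin n) (Fin n) ℝ := β • 1 - W with hBm
  -- pointwise facts for any t ∈ Ioo 0 1
  have hfacts : ∀ t ∈ Set.Ioo (0:ℝ) 1,
      (Nf t).det ≠ 0 ∧ ((1:Matrix (Fin n) (Fin n) ℝ) - t • W).det ≠ 0 := by
    intro t ht
    constructor
    · exact det_ne_zero hb1 (le_of_lt ht.1) (by nlinarith [ht.1, ht.2])
    · have := det_ne_zero (W := W) hb1 (le_of_lt ht.1) (show t < 1 from ht.2)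
      simpa using this
  -- reduction of the matrix expression
  have hred : ∀ t ∈ Set.Ioo (0:ℝ) 1,
      (1 - β • ((1 - t) • ((1:Matrix (Fin n) (Fin n) ℝ) - t • W)⁻¹))⁻¹ * ((1 - t) • (1 - t • W)⁻¹)
        = (1 - t) • (Nf t)⁻¹ := by
    intro t ht
    set Q : Matrix (Fin n) (Fin n) ℝ := 1 - t • W with hQ
    set P : Matrix (Fin n) (Fin n) ℝ := (Nf t)⁻¹ with hP
    have hdetN := (hfacts t ht).1
    have hdetQ := (hfacts t ht).2
    have hNP : Nf t * P = 1 := Matrix.mul_nonsing_inv _ (isUnit_iff_ne_zero.mpr hdetN)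
    have hPN : P * Nf t = 1 := Matrix.nonsing_inv_mul _ (isUnit_iff_ne_zero.mpr hdetN)
    have hQQ : Q * Q⁻¹ = 1 := Matrix.mul_nonsing_inv _ (isUnit_iff_ne_zero.mpr hdetQ)
    have hQ'Q : Q⁻¹ * Q = 1 := Matrix.nonsing_inv_mul _ (isUnit_iff_ne_zero.mpr hdetQ)
    have hNQ : Nf t * Q = Q * Nf t := by
      have h := poly_comm W (1 - β + t*β) t 1 t
      simpa only [one_smul, hNf, hQ] using h
    have hsplit : Nf t = Q - (β*(1-t)) • 1 := by
      rw [hNf, hQ]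
      module
    have step1 : (1:Matrix (Fin n) (Fin n) ℝ) - β • ((1 - t) • Q⁻¹) = Nf t * Q⁻¹ := by
      rw [hsplit, Matrix.sub_mul, hQQ, smul_mul_assoc, Matrix.one_mul, smul_smul]
    have step2 : (Nf t * Q⁻¹)⁻¹ = Q * P := by
      apply Matrix.inv_eq_right_inv
      rw [Matrix.mul_assoc, ← Matrix.mul_assoc Q⁻¹ Q P, hQ'Q, Matrix.one_mul, hNP]
    have step3 : P * Q = Q * P := by
      calc P * Q = P * (Q * (Nf t * P)) := by rw [hNP, Matrix.mul_one]
        _ = P * ((Q * Nf t) * P) := by rw [Matrix.mul_assoc Q (Nf t) P]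
        _ = P * ((Nf t * Q) * P) := by rw [hNQ]
        _ = (P * Nf t) * (Q * P) := by simp only [Matrix.mul_assoc]
        _ = Q * P := by rw [hPN, Matrix.one_mul]
    rw [step1, step2, Matrix.mul_smul, ← step3, Matrix.mul_assoc, hQQ, Matrix.mul_one]
  -- symmetric inverse, ones eigenvector, sums
  have hPsymm : ∀ t ∈ Set.Ioo (0:ℝ) 1, ((Nf t)⁻¹)ᵀ = (Nf t)⁻¹ := by
    intro t ht
    rw [Matrix.transpose_nonsing_inv]
    congr 1
    rw [hNf, Matrix.transpose_sub, Matrix.transpose_smul, Matrix.transpose_smul,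
      Matrix.transpose_one, hsym]
  have hspos : ∀ t ∈ Set.Ioo (0:ℝ) 1, 0 < (1-β)*(1-t) := by
    intro t ht
    have := ht.2
    nlinarith [hβ1]
  have hP1 : ∀ t ∈ Set.Ioo (0:ℝ) 1,
      (Nf t)⁻¹ *ᵥ (fun _ => (1:ℝ)) = ((1-β)*(1-t))⁻¹ • (fun _ => (1:ℝ)) := by
    intro t ht
    have hdetN := (hfacts t ht).1
    have hPN : (Nf t)⁻¹ * Nf t = 1 := Matrix.nonsing_inv_mul _ (isUnit_iff_ne_zero.mpr hdetN)
    have hs0 : (1-β)*(1-t) ≠ 0 := (hspos t ht).ne'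
    have hN1 : Nf t *ᵥ (fun _ => (1:ℝ)) = ((1-β)*(1-t)) • (fun _ => (1:ℝ)) := by
      rw [hNf, poly_mulVec, hone]
      funext i
      simp only [Pi.sub_apply, Pi.smul_apply, smul_eq_mul, mul_one]
      ring
    have h2 : (Nf t)⁻¹ *ᵥ (Nf t *ᵥ (fun _ => (1:ℝ))) = (fun _ => (1:ℝ)) := by
      rw [Matrix.mulVec_mulVec, hPN, Matrix.one_mulVec]
    rw [hN1] at h2
    have h3 : (Nf t)⁻¹ *ᵥ (((1-β)*(1-t)) • (fun _ => (1:ℝ)))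
        = ((1-β)*(1-t)) • ((Nf t)⁻¹ *ᵥ (fun _ => (1:ℝ))) := by
      rw [Matrix.mulVec_smul]
    rw [h3] at h2
    calc (Nf t)⁻¹ *ᵥ (fun _ => (1:ℝ))
        = ((1-β)*(1-t))⁻¹ • (((1-β)*(1-t)) • ((Nf t)⁻¹ *ᵥ (fun _ => (1:ℝ)))) := by
          rw [smul_smul, inv_mul_cancel₀ hs0, one_smul]
      _ = ((1-β)*(1-t))⁻¹ • (fun _ => (1:ℝ)) := by rw [h2]
  have hsumP : ∀ t ∈ Set.Ioo (0:ℝ) 1, ∀ w : Fin n → ℝ,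
      ∑ i, ((Nf t)⁻¹ *ᵥ w) i = ((1-β)*(1-t))⁻¹ * ∑ i, w i := by
    intro t ht w
    have h1 : ∑ i, ((Nf t)⁻¹ *ᵥ w) i = (fun _ => (1:ℝ)) ⬝ᵥ ((Nf t)⁻¹ *ᵥ w) := by
      simp [dotProduct]
    rw [h1, Matrix.dotProduct_mulVec, ← Matrix.mulVec_transpose, hPsymm t ht, hP1 t ht,
      smul_dotProduct]
    simp [dotProduct]
  -- variance rewriting
  have hVeq : ∀ t ∈ Set.Ioo (0:ℝ) 1,
      varV ((1 - β) •
        (((1 - β • ((1 - t) • ((1:Matrix (Fin n) (Fin n) ℝ) - t • W)⁻¹))⁻¹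
          * ((1 - t) • (1 - t • W)⁻¹)) *ᵥ xstar))
      = ∑ i, (((1-β)*(1-t)) • ((Nf t)⁻¹ *ᵥ z)) i ^ 2 := by
    intro t ht
    have hs0 : (1-β)*(1-t) ≠ 0 := (hspos t ht).ne'
    rw [hred t ht]
    have hF : (1 - β) • (((1 - t) • (Nf t)⁻¹) *ᵥ xstar)
        = ((1-β)*(1-t)) • ((Nf t)⁻¹ *ᵥ xstar) := by
      rw [Matrix.smul_mulVec, smul_smul]
    rw [hF]
    -- mean is preserved
    have hsum_x : ∑ i, (((1-β)*(1-t)) • ((Nf t)⁻¹ *ᵥ xstar)) i = ∑ i, xstar i := by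
      simp only [Pi.smul_apply, smul_eq_mul, ← Finset.mul_sum]
      rw [hsumP t ht xstar, ← mul_assoc, mul_inv_cancel₀ hs0, one_mul]
    have hmean : meanV (((1-β)*(1-t)) • ((Nf t)⁻¹ *ᵥ xstar)) = m := by
      rw [meanV, hsum_x, hm, meanV]
    -- centered vector
    have hxz : xstar = fun i => z i + m := funext fun i => by simp [hz]
    have hones : (fun _ : Fin n => m) = m • (fun _ : Fin n => (1:ℝ)) := by
      funext i; simp
    have hcenter : ∀ i, (((1-β)*(1-t)) • ((Nf t)⁻¹ *ᵥ xstar)) i - m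
        = (((1-β)*(1-t)) • ((Nf t)⁻¹ *ᵥ z)) i := by
      intro i
      have hxid : z + (fun _ : Fin n => m) = xstar := funext fun j => by simp [hz]
      have hsplitv : (Nf t)⁻¹ *ᵥ xstar = (Nf t)⁻¹ *ᵥ z + (Nf t)⁻¹ *ᵥ (fun _ => m) := by
        rw [← hxid, Matrix.mulVec_add]
      have hconst : (Nf t)⁻¹ *ᵥ (fun _ => m) = (m * ((1-β)*(1-t))⁻¹) • (fun _ => (1:ℝ)) := by
        rw [hones, Matrix.mulVec_smul, hP1 t ht, smul_smul]
      rw [hsplitv, hconst]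
      simp only [Pi.add_apply, Pi.smul_apply, smul_eq_mul, mul_add, mul_one]
      have : ((1-β)*(1-t)) * (m * ((1-β)*(1-t))⁻¹) = m := by
        rw [mul_comm, mul_assoc, inv_mul_cancel₀ hs0, mul_one]
      rw [this]
      ring
    rw [varV, hmean]
    exact Finset.sum_congr rfl fun i _ => by rw [hcenter i]
  -- derivative computation at the point a
  obtain ⟨ha0, ha1⟩ := ha
  have haI : a ∈ Set.Ioo (0:ℝ) 1 := ⟨ha0, ha1⟩
  have hdetN := (hfacts a haI).1
  have hu : IsUnit (Nf a) := (Matrix.isUnit_iff_isUnit_det _).mpr (isUnit_iff_ne_zero.mpr hdetN)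
  set P : Matrix (Fin n) (Fin n) ℝ := (Nf a)⁻¹ with hPdef
  have hNP : Nf a * P = 1 := Matrix.mul_nonsing_inv _ (isUnit_iff_ne_zero.mpr hdetN)
  have hPN : P * Nf a = 1 := Matrix.nonsing_inv_mul _ (isUnit_iff_ne_zero.mpr hdetN)
  have hNder : HasDerivAt Nf Bm a := by
    have h1 : HasDerivAt (fun t : ℝ => 1 - β + t*β) β a := by
      simpa using ((hasDerivAt_id a).mul_const β).const_add (1-β)
    have h2 := h1.smul_const (1 : Matrix (Fin n) (Fin n) ℝ)
    have h3 := (hasDerivAt_id a).smul_const W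
    have h4 := h2.sub h3
    have h5 : HasDerivAt (fun t : ℝ => (1 - β + t*β) • (1 : Matrix (Fin n) (Fin n) ℝ) - t • W)
        (β • (1 : Matrix (Fin n) (Fin n) ℝ) - (1:ℝ) • W) a := h4
    simpa [hNf, hBm, one_smul] using h5
  have hPder : HasDerivAt (fun t => (Nf t)⁻¹) (-(P * Bm * P)) a := by
    have key := hasFDerivAt_ringInverse (𝕜 := ℝ) hu.unit
    rw [hu.unit_spec] at key
    have comp := key.comp_hasDerivAt a hNder
    have hcoe : ((hu.unit⁻¹ : (Matrix (Fin n) (Fin n) ℝ)ˣ) : Matrix (Fin n) (Fin n) ℝ) = P := by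
      rw [Matrix.coe_units_inv, hu.unit_spec]
    have hfun : (fun t => (Nf t)⁻¹) = (Ring.inverse ∘ Nf) :=
      funext fun t => Matrix.nonsing_inv_eq_ringInverse _
    rw [hfun]
    refine comp.congr_deriv ?_
    simp [hcoe]
  -- vector-valued derivative
  have hvec : HasDerivAt (fun t => (Nf t)⁻¹ *ᵥ z) ((-(P * Bm * P)) *ᵥ z) a := by
    let L : Matrix (Fin n) (Fin n) ℝ →ₗ[ℝ] (Fin n → ℝ) :=
      { toFun := fun M => M *ᵥ z
        map_add' := fun M N' => Matrix.add_mulVec M N' z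
        map_smul' := fun c M => Matrix.smul_mulVec c M z }
    have hL := (LinearMap.toContinuousLinearMap L).hasFDerivAt (x := P)
    have comp := hL.comp_hasDerivAt a hPder
    exact comp
  have hsder : HasDerivAt (fun t : ℝ => (1-β)*(1-t)) (-(1-β)) a := by
    have := ((hasDerivAt_id a).const_sub 1).const_mul (1-β)
    simpa using this
  set s0 : ℝ := (1-β)*(1-a) with hs0def
  set v : Fin n → ℝ := P *ᵥ z with hv
  set u : Fin n → ℝ := P *ᵥ v with hudef
  set yv : Fin n → ℝ := s0 • v with hyv
  set yd : Fin n → ℝ := s0 • ((-(P * Bm * P)) *ᵥ z) + (-(1-β)) • v with hyd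
  have hy : HasDerivAt (fun t => ((1-β)*(1-t)) • ((Nf t)⁻¹ *ᵥ z)) yd a := hsder.smul hvec
  have hVder : HasDerivAt (fun t => ∑ i, (((1-β)*(1-t)) • ((Nf t)⁻¹ *ᵥ z)) i ^ 2)
      (∑ i, 2 * yv i * yd i) a := by
    apply HasDerivAt.fun_sum
    intro i _
    have hi := (hasDerivAt_pi.mp hy) i
    have := hi.fun_pow 2
    have hyvi : ((1-β)*(1-a)) • ((Nf a)⁻¹ *ᵥ z) = yv := rfl
    refine this.congr_deriv ?_
    rw [hyvi]
    norm_num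
  refine ⟨∑ i, 2 * yv i * yd i, ?_, ?_⟩
  · -- negativity
    have hs0pos : 0 < s0 := hspos a haI
    -- identity for yd
    have key2 : (-(1-β)) • (Nf a) - s0 • Bm
        = (-(1-β)) • ((1:Matrix (Fin n) (Fin n) ℝ) - W) := by
      simp only [hNf, hBm, hs0def]
      module
    have hPNP : P * ((-(1-β)) • (Nf a) - s0 • Bm) * P
        = (-(1-β)) • P - s0 • (P * Bm * P) := by
      simp only [Matrix.mul_sub, Matrix.sub_mul, Matrix.mul_smul, Matrix.smul_mul, hPN,
        Matrix.one_mul]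
    have hE : (-(1-β)) • P - s0 • (P * Bm * P)
        = (-(1-β)) • (P * ((1:Matrix (Fin n) (Fin n) ℝ) - W) * P) := by
      rw [← hPNP, key2]
      simp only [Matrix.mul_smul, Matrix.smul_mul]
    have hydEq : yd = ((-(1-β)) • (P * ((1:Matrix (Fin n) (Fin n) ℝ) - W) * P)) *ᵥ z := by
      rw [hyd, ← hE, Matrix.sub_mulVec, Matrix.smul_mulVec, Matrix.smul_mulVec,
        Matrix.neg_mulVec, smul_neg, hv]
      abel
    -- the positive quadratic form
    have hNu : Nf a *ᵥ u = v := by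
      rw [hudef, Matrix.mulVec_mulVec, hNP, Matrix.one_mulVec]
    have hNv : Nf a *ᵥ v = z := by
      rw [hv, Matrix.mulVec_mulVec, hNP, Matrix.one_mulVec]
    have hsumu : ∑ i, u i = 0 := by
      rw [hudef, hsumP a haI, hv, hsumP a haI, hzsum, mul_zero, mul_zero]
    have hune : u ≠ 0 := by
      intro h0
      apply hzne
      rw [← hNv, ← hNu, h0, Matrix.mulVec_zero, Matrix.mulVec_zero]
    have hpos : 0 < u ⬝ᵥ ((((1:Matrix (Fin n) (Fin n) ℝ) - W) * Nf a) *ᵥ u) := by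
      have := key_pos hsym hb2 hstrict (p := 1-β+a*β) (q := a)
        (hq := ha0) (hpq := by nlinarith) hsumu hune
      simpa [hNf] using this
    -- rewrite inner product
    have hinner : v ⬝ᵥ ((P * ((1:Matrix (Fin n) (Fin n) ℝ) - W) * P) *ᵥ z)
        = u ⬝ᵥ ((((1:Matrix (Fin n) (Fin n) ℝ) - W) * Nf a) *ᵥ u) := by
      have e1 : (P * ((1:Matrix (Fin n) (Fin n) ℝ) - W) * P) *ᵥ z
          = P *ᵥ (((1:Matrix (Fin n) (Fin n) ℝ) - W) *ᵥ v) := by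
        rw [hv, Matrix.mulVec_mulVec, Matrix.mulVec_mulVec, Matrix.mul_assoc]
      rw [e1, Matrix.dotProduct_mulVec v P, ← Matrix.mulVec_transpose, hPsymm a haI,
        ← hNu, Matrix.mulVec_mulVec,
        Matrix.nonsing_inv_mul _ (isUnit_iff_ne_zero.mpr hdetN), Matrix.one_mulVec,
        Matrix.mulVec_mulVec]
    have hdot : yv ⬝ᵥ yd = (s0 * (-(1-β))) *
        (u ⬝ᵥ ((((1:Matrix (Fin n) (Fin n) ℝ) - W) * Nf a) *ᵥ u)) := by
      rw [hydEq, hyv, Matrix.smul_mulVec, smul_dotProduct, dotProduct_smul,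
        hinner, smul_eq_mul, smul_eq_mul, mul_assoc, hs0def]
      ring
    have hneg : yv ⬝ᵥ yd < 0 := by
      rw [hdot]
      have : s0 * (-(1-β)) < 0 := by nlinarith
      exact mul_neg_of_neg_of_pos this hpos
    have hDeq : ∑ i, 2 * yv i * yd i = 2 * (yv ⬝ᵥ yd) := by
      simp only [dotProduct, Finset.mul_sum]
      exact Finset.sum_congr rfl fun i _ => by ring
    rw [hDeq]
    linarith
  · -- the derivative transfers along eventual equality
    have hEv : (fun t => varV ((1 - β) •
        (((1 - β • ((1 - t) • ((1:Matrix (Fin n) (Fin n) ℝ) - t • W)⁻¹))⁻¹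
          * ((1 - t) • (1 - t • W)⁻¹)) *ᵥ xstar)))
        =ᶠ[nhds a] (fun t => ∑ i, (((1-β)*(1-t)) • ((Nf t)⁻¹ *ᵥ z)) i ^ 2) := by
      filter_upwards [Ioo_mem_nhds ha0 ha1] with t ht using hVeq t ht
    exact hVder.congr_of_eventuallyEq hEv

end Aux

/-- variance decreases in peer susceptibility.  On a `d`-regular
graph with fixed `β ∈ (0,1)` and nonconstant `x*`, the variance of
`x_PS(α) = (1 − β)(I − βΨ_∞(α))⁻¹ Ψ_∞(α) x*`, where
`Ψ_∞(α) = (1 − α)(I − αW)⁻¹`, is differentiable in `α` on `(0,1)` with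
strictly negative derivative. -/
theorem variance_decreasing_in_peer_susceptibility {n : ℕ} (hn : 2 ≤ n)
    (G : SimpleGraph (Fin n)) [DecidableRel G.Adj] (hG : G.Connected)
    (d : ℕ) (hd : 0 < d) (hreg : ∀ i, G.degree i = d)
    (β : ℝ) (hβ : β ∈ Set.Ioo (0 : ℝ) 1)
    (xstar : Fin n → ℝ) (hx : ∀ i, xstar i ∈ Set.Icc (0 : ℝ) 1)
    (hvar : 0 < varV xstar) :
    let W := rowNormAdj G
    let PsiInf : ℝ → Matrix (Fin n) (Fin n) ℝ := fun a => (1 - a) • (1 - a • W)⁻¹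
    let xPS : ℝ → Fin n → ℝ :=
      fun a => (1 - β) • (((1 - β • PsiInf a)⁻¹ * PsiInf a) *ᵥ xstar)
    (∀ a ∈ Set.Ioo (0 : ℝ) 1, DifferentiableAt ℝ (fun a' => varV (xPS a')) a) ∧
    (∀ a ∈ Set.Ioo (0 : ℝ) 1, deriv (fun a' => varV (xPS a')) a < 0) := by
  intro W PsiInf xPS
  have hWd : W = ((d:ℝ))⁻¹ • G.adjMatrix ℝ := rowNormAdj_eq' G hreg
  have hsym : Wᵀ = W := by rw [hWd]; exact W_symm G hd
  have hone : W *ᵥ (fun _ => (1:ℝ)) = fun _ => (1:ℝ) := by rw [hWd]; exact W_one G hd hreg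
  have hb1 : ∀ u, u ⬝ᵥ (W *ᵥ u) ≤ u ⬝ᵥ u := by rw [hWd]; exact W_b1 G hd hreg
  have hb2 : ∀ u, (W *ᵥ u) ⬝ᵥ (W *ᵥ u) ≤ u ⬝ᵥ u := by rw [hWd]; exact W_b2 G hd hreg
  have hstrict : ∀ u : Fin n → ℝ, ∑ i, u i = 0 → u ≠ 0 → u ⬝ᵥ (W *ᵥ u) < u ⬝ᵥ u := by
    rw [hWd]; exact fun u h1 h2 => W_strict G hd hreg hn hG u h1 h2
  constructor
  · intro a ha
    obtain ⟨D, _, hDer⟩ :=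
      main_pointwise hn W hsym hone hb1 hb2 hstrict β hβ xstar hvar a ha
    exact HasDerivAt.differentiableAt
      (show HasDerivAt (fun a' => varV (xPS a')) D a from hDer)
  · intro a ha
    obtain ⟨D, hDneg, hDer⟩ :=
      main_pointwise hn W hsym hone hb1 hb2 hstrict β hβ xstar hvar a ha
    have h2 : HasDerivAt (fun a' => varV (xPS a')) D a := hDer
    rw [h2.deriv]
    exact hDneg
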